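/- Let X, X_ε be Banach spaces with operators E_ε : X → X_ε, and let T_ε : X_ε → X_ε, T : X → X be bounded linear operators such that T_ε converges compactly to T (meaning: whenever ‖u_ε‖_{X_ε} is bounded, the family (T_ε u_ε) has an E-convergent subsequence, and T_ε u_ε E-converges to T u whenever u_ε E-converges to u). Suppose I + T is injective with bounded inverse on X and ‖E_ε u‖_{X_ε} → ‖u‖_X for all u. Then there exist ε₁ > 0 and M > 0 such that for all ε ∈ (0, ε₁], I + T_ε is invertible and ‖(I + T_ε)^{-1}‖_{L(X_ε)} ≤ M. -/

import Mathlib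

open Filter Topology

/-- If `T_ε` converges compactly to `T` (E-precompactness of images of bounded families and
EE-convergence), and `I + T` has a bounded inverse on `X`, then for all small `ε` the
operators `I + T_ε` are invertible with uniformly bounded inverses. -/
theorem stmt_6 (X : Type*) [NormedAddCommGroup X] [NormedSpace ℝ X] [CompleteSpace X]
    (ε₀ : ℝ) (hε₀ : 0 < ε₀)
    (Xε : ℝ → Type*) [∀ ε, NormedAddCommGroup (Xε ε)] [∀ ε, NormedSpace ℝ (Xε ε)]
    [∀ ε, CompleteSpace (Xε ε)]
    (E : ∀ ε, X →L[ℝ] Xε ε)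
    (hE : ∀ u : X, Tendsto (fun ε => ‖E ε u‖) (𝓝[>] 0) (𝓝 ‖u‖))
    (Tε : ∀ ε, Xε ε →L[ℝ] Xε ε) (T : X →L[ℝ] X)
    -- compact convergence, part 1: E-precompactness of images of bounded families
    (hprecomp : ∀ (e : ℕ → ℝ), (∀ n, e n ∈ Set.Ioc (0 : ℝ) ε₀) →
      Tendsto e atTop (𝓝 0) →
      ∀ (u : ∀ n, Xε (e n)) (M : ℝ), (∀ n, ‖u n‖ ≤ M) →
        ∃ (φ : ℕ → ℕ) (v : X), StrictMono φ ∧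
          Tendsto (fun n => ‖Tε (e (φ n)) (u (φ n)) - E (e (φ n)) v‖) atTop (𝓝 0))
    -- compact convergence, part 2: EE-convergence
    (hEE : ∀ (e : ℕ → ℝ), (∀ n, e n ∈ Set.Ioc (0 : ℝ) ε₀) →
      Tendsto e atTop (𝓝 0) →
      ∀ (u : ∀ n, Xε (e n)) (v : X),
        Tendsto (fun n => ‖u n - E (e n) v‖) atTop (𝓝 0) →
        Tendsto (fun n => ‖Tε (e n) (u n) - E (e n) (T v)‖) atTop (𝓝 0))
    -- I + T injective with bounded inverse
    (hinv : ∃ S : X →L[ℝ] X,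
      (∀ x, S ((ContinuousLinearMap.id ℝ X + T) x) = x) ∧
      (∀ x, (ContinuousLinearMap.id ℝ X + T) (S x) = x)) :
    ∃ ε₁ > (0 : ℝ), ∃ M > (0 : ℝ), ∀ ε ∈ Set.Ioc (0 : ℝ) ε₁,
      ∃ S : Xε ε →L[ℝ] Xε ε,
        (∀ x, S ((ContinuousLinearMap.id ℝ (Xε ε) + Tε ε) x) = x) ∧
        (∀ x, (ContinuousLinearMap.id ℝ (Xε ε) + Tε ε) (S x) = x) ∧ ‖S‖ ≤ M := by
  classical
  obtain ⟨S, hS1, hS2⟩ := hinv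
  have hone : Tendsto (fun n : ℕ => 1 / ((n : ℝ) + 1)) atTop (𝓝 0) :=
    tendsto_one_div_add_atTop_nhds_zero_nat
  -- Step 1: uniform lower bound
  have step1 : ∃ c > (0:ℝ), ∃ ε₁ > (0:ℝ), ε₁ ≤ ε₀ ∧
      ∀ ε ∈ Set.Ioc (0:ℝ) ε₁, ∀ u : Xε ε, c * ‖u‖ ≤ ‖u + Tε ε u‖ := by
    by_contra hcon
    push_neg at hcon
    have hsel : ∀ n : ℕ, ∃ ε ∈ Set.Ioc (0:ℝ) (min ε₀ (1/((n:ℝ)+1))),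
        ∃ u : Xε ε, ‖u + Tε ε u‖ < (1/((n:ℝ)+1)) * ‖u‖ := by
      intro n
      have hn : (0:ℝ) < 1/((n:ℝ)+1) := by positivity
      exact hcon (1/((n:ℝ)+1)) hn (min ε₀ (1/((n:ℝ)+1))) (lt_min hε₀ hn) (min_le_left _ _)
    choose e he u0 hu0 using hsel
    have hu0ne : ∀ n, u0 n ≠ 0 := by
      intro n h
      have := hu0 n
      rw [h] at this
      simp at this
    have hu0pos : ∀ n, (0:ℝ) < ‖u0 n‖ := fun n => norm_pos_iff.mpr (hu0ne n)
    set u : ∀ n, Xε (e n) := fun n => (‖u0 n‖)⁻¹ • u0 n with hu_def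
    have hu1 : ∀ n, ‖u n‖ = 1 := by
      intro n
      simp [hu_def, norm_smul, inv_mul_cancel₀ (hu0pos n).ne']
    have hun : ∀ n, ‖u n + Tε (e n) (u n)‖ ≤ 1/((n:ℝ)+1) := by
      intro n
      have h1 : u n + Tε (e n) (u n) = (‖u0 n‖)⁻¹ • (u0 n + Tε (e n) (u0 n)) := by
        simp [hu_def, smul_add, map_smul]
      rw [h1, norm_smul, norm_inv, norm_norm]
      rw [inv_mul_le_iff₀ (hu0pos n)]
      calc ‖u0 n + Tε (e n) (u0 n)‖ ≤ 1/((n:ℝ)+1) * ‖u0 n‖ := (hu0 n).le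
        _ = ‖u0 n‖ * (1/((n:ℝ)+1)) := mul_comm _ _
    have he' : ∀ n, e n ∈ Set.Ioc (0:ℝ) ε₀ :=
      fun n => ⟨(he n).1, le_trans (he n).2 (min_le_left _ _)⟩
    have hetend : Tendsto e atTop (𝓝 0) :=
      squeeze_zero (fun n => (he n).1.le)
        (fun n => le_trans (he n).2 (min_le_right _ _)) hone
    obtain ⟨φ, v, hφ, hTconv⟩ := hprecomp e he' hetend u 1 (fun n => (hu1 n).le)
    have hetendφ : Tendsto (fun n => e (φ n)) atTop (𝓝 0) :=
      hetend.comp hφ.tendsto_atTop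
    have he'' : ∀ n, e (φ n) ∈ Set.Ioc (0:ℝ) ε₀ := fun n => he' (φ n)
    have hg : Tendsto (fun n => ‖u (φ n) + Tε (e (φ n)) (u (φ n))‖) atTop (𝓝 0) := by
      refine squeeze_zero (fun n => norm_nonneg _) (g := fun n : ℕ => 1/((n:ℝ)+1)) ?_ hone
      intro n
      refine le_trans (hun (φ n)) ?_
      have hφn : (n:ℝ) ≤ ((φ n : ℕ) : ℝ) := Nat.cast_le.mpr hφ.le_apply
      exact one_div_le_one_div_of_le (by positivity) (by linarith)
    have huv : Tendsto (fun n => ‖u (φ n) - E (e (φ n)) (-v)‖) atTop (𝓝 0) := by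
      apply squeeze_zero (fun n => norm_nonneg _)
        (g := fun n => ‖u (φ n) + Tε (e (φ n)) (u (φ n))‖ +
          ‖Tε (e (φ n)) (u (φ n)) - E (e (φ n)) v‖)
      · intro n
        have h1 : u (φ n) - E (e (φ n)) (-v) =
            (u (φ n) + Tε (e (φ n)) (u (φ n))) -
            (Tε (e (φ n)) (u (φ n)) - E (e (φ n)) v) := by
          rw [map_neg]; abel
        rw [h1]
        exact norm_sub_le _ _
      · simpa using hg.add hTconv
    have hTconv2 := hEE (fun n => e (φ n)) he'' hetendφ (fun n => u (φ n)) (-v) huv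
    have hEv : Tendsto (fun n => ‖E (e (φ n)) (v + T v)‖) atTop (𝓝 0) := by
      apply squeeze_zero (fun n => norm_nonneg _)
        (g := fun n => ‖Tε (e (φ n)) (u (φ n)) - E (e (φ n)) v‖ +
          ‖Tε (e (φ n)) (u (φ n)) - E (e (φ n)) (T (-v))‖)
      · intro n
        have h1 : E (e (φ n)) (v + T v) =
            (Tε (e (φ n)) (u (φ n)) - E (e (φ n)) (T (-v))) -
            (Tε (e (φ n)) (u (φ n)) - E (e (φ n)) v) := by
          rw [map_neg T, map_neg (E (e (φ n))), map_add]
          abel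
        rw [h1]
        refine le_trans (norm_sub_le _ _) ?_
        rw [add_comm]
      · simpa using hTconv.add hTconv2
    have htendφ' : Tendsto (fun n => e (φ n)) atTop (𝓝[>] (0:ℝ)) :=
      tendsto_nhdsWithin_of_tendsto_nhds_of_eventually_within _ hetendφ
        (Eventually.of_forall fun n => (he'' n).1)
    have hElim : Tendsto (fun n => ‖E (e (φ n)) (v + T v)‖) atTop (𝓝 ‖v + T v‖) :=
      (hE (v + T v)).comp htendφ'
    have hvTv : v + T v = 0 := by
      have h0 : ‖v + T v‖ = 0 := tendsto_nhds_unique hElim hEv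
      exact norm_eq_zero.mp h0
    have hv0 : v = 0 := by
      have := hS1 v
      rw [ContinuousLinearMap.add_apply, ContinuousLinearMap.id_apply, hvTv] at this
      rw [← this, map_zero]
    rw [hv0] at huv
    have huv' : Tendsto (fun _ : ℕ => (1:ℝ)) atTop (𝓝 0) := by
      convert huv using 2 with n
      simp [hu1 (φ n)]
    have := tendsto_nhds_unique huv' tendsto_const_nhds
    norm_num at this
  obtain ⟨c, hc, ε₁, hε₁, hε₁₀, hlow⟩ := step1
  -- Step 2: surjectivity for small ε
  have step2 : ∃ ε₂ > (0:ℝ), ε₂ ≤ ε₁ ∧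
      ∀ ε ∈ Set.Ioc (0:ℝ) ε₂, Function.Surjective (fun x => x + Tε ε x : Xε ε → Xε ε) := by
    by_contra hcon
    push_neg at hcon
    have hsel : ∀ n : ℕ, ∃ ε ∈ Set.Ioc (0:ℝ) (min ε₁ (1/((n:ℝ)+1))),
        ¬ Function.Surjective (fun x => x + Tε ε x : Xε ε → Xε ε) := by
      intro n
      have hn : (0:ℝ) < 1/((n:ℝ)+1) := by positivity
      exact hcon (min ε₁ (1/((n:ℝ)+1))) (lt_min hε₁ hn) (min_le_left _ _)
    choose e he hns using hsel
    have he1 : ∀ n, e n ∈ Set.Ioc (0:ℝ) ε₁ :=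
      fun n => ⟨(he n).1, le_trans (he n).2 (min_le_left _ _)⟩
    have he' : ∀ n, e n ∈ Set.Ioc (0:ℝ) ε₀ :=
      fun n => ⟨(he n).1, le_trans (he1 n).2 hε₁₀⟩
    have hetend : Tendsto e atTop (𝓝 0) :=
      squeeze_zero (fun n => (he n).1.le)
        (fun n => le_trans (he n).2 (min_le_right _ _)) hone
    -- the operators
    set A : ∀ n, Xε (e n) →L[ℝ] Xε (e n) :=
      fun n => ContinuousLinearMap.id ℝ (Xε (e n)) + Tε (e n) with hA_def
    have hAapp : ∀ n x, A n x = x + Tε (e n) x := by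
      intro n x
      simp [hA_def]
    -- range is closed
    have hrange_closed : ∀ n, IsClosed ((LinearMap.range (A n : Xε (e n) →ₗ[ℝ] Xε (e n)) :
        Submodule ℝ (Xε (e n))) : Set (Xε (e n))) := by
      intro n
      have hanti : AntilipschitzWith (⟨c⁻¹, by positivity⟩) (A n) := by
        apply ContinuousLinearMap.antilipschitz_of_bound
        intro x
        have h := hlow (e n) (he1 n) x
        rw [← hAapp n x] at h
        change ‖x‖ ≤ c⁻¹ * ‖A n x‖
        rw [inv_mul_eq_div, le_div_iff₀ hc]
        nlinarith [h]
      have := hanti.isClosed_range (A n).uniformContinuous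
      simpa [LinearMap.coe_range] using this
    -- Riesz lemma
    have hriesz : ∀ n, ∃ f : Xε (e n), ‖f‖ = 1 ∧
        ∀ y, (1:ℝ)/2 ≤ ‖f - A n y‖ := by
      intro n
      have hF : ∃ x : Xε (e n), x ∉ LinearMap.range (A n : Xε (e n) →ₗ[ℝ] Xε (e n)) := by
        by_contra h
        push_neg at h
        apply hns n
        intro b
        obtain ⟨a, ha⟩ := LinearMap.mem_range.mp (h b)
        exact ⟨a, by simpa [hAapp] using ha⟩
      obtain ⟨x₀, hx₀, hx₀'⟩ := riesz_lemma (𝕜 := ℝ) (hrange_closed n) hF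
        (r := 1/2) (by norm_num)
      have hx₀ne : x₀ ≠ 0 := by
        intro h
        exact hx₀ (h ▸ Submodule.zero_mem _)
      have hx₀pos : (0:ℝ) < ‖x₀‖ := norm_pos_iff.mpr hx₀ne
      refine ⟨(‖x₀‖)⁻¹ • x₀, by simp [norm_smul, inv_mul_cancel₀ hx₀pos.ne'], ?_⟩
      intro y
      have hy : A n (‖x₀‖ • y) ∈ LinearMap.range (A n : Xε (e n) →ₗ[ℝ] Xε (e n)) :=
        LinearMap.mem_range_self _ _
      have := hx₀' _ hy
      have h2 : (‖x₀‖)⁻¹ • x₀ - A n y = (‖x₀‖)⁻¹ • (x₀ - A n (‖x₀‖ • y)) := by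
        rw [smul_sub, map_smul, smul_smul, inv_mul_cancel₀ hx₀pos.ne', one_smul]
      rw [h2, norm_smul, norm_inv, norm_norm]
      rw [le_inv_mul_iff₀ hx₀pos]
      calc ‖x₀‖ * (1/2) = 1/2 * ‖x₀‖ := by ring
        _ ≤ ‖x₀ - A n (‖x₀‖ • y)‖ := this
    choose f hf1 hfr using hriesz
    -- compactness
    obtain ⟨φ, w, hφ, hTconv⟩ := hprecomp e he' hetend f 1 (fun n => (hf1 n).le)
    have hetendφ : Tendsto (fun n => e (φ n)) atTop (𝓝 0) := hetend.comp hφ.tendsto_atTop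
    have he'' : ∀ n, e (φ n) ∈ Set.Ioc (0:ℝ) ε₀ := fun n => he' (φ n)
    -- solve the limit equation
    set z : X := S (-w) with hz_def
    have hz : z + T z = -w := by
      have := hS2 (-w)
      rwa [ContinuousLinearMap.add_apply, ContinuousLinearMap.id_apply] at this
    -- EE-convergence for the constant sequence E z
    have hEz : Tendsto (fun n => ‖Tε (e (φ n)) (E (e (φ n)) z) - E (e (φ n)) (T z)‖)
        atTop (𝓝 0) := by
      apply hEE (fun n => e (φ n)) he'' hetendφ (fun n => E (e (φ n)) z) z
      simp
    -- the contradiction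
    have hkey : ∀ n, f (φ n) - A (φ n) (f (φ n) + E (e (φ n)) z) =
        -((Tε (e (φ n)) (f (φ n)) - E (e (φ n)) w) +
          (Tε (e (φ n)) (E (e (φ n)) z) - E (e (φ n)) (T z))) := by
      intro n
      have h0 : E (e (φ n)) z + (E (e (φ n)) (T z) + E (e (φ n)) w) = 0 := by
        rw [← map_add, ← map_add, show z + (T z + w) = 0 by rw [← add_assoc, hz]; abel,
          map_zero]
      rw [hAapp, map_add]
      have h1 : E (e (φ n)) z = -(E (e (φ n)) (T z) + E (e (φ n)) w) :=
        eq_neg_of_add_eq_zero_left h0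
      rw [h1]
      abel
    have hconv : Tendsto (fun n => ‖f (φ n) - A (φ n) (f (φ n) + E (e (φ n)) z)‖)
        atTop (𝓝 0) := by
      apply squeeze_zero (fun n => norm_nonneg _)
        (g := fun n => ‖Tε (e (φ n)) (f (φ n)) - E (e (φ n)) w‖ +
          ‖Tε (e (φ n)) (E (e (φ n)) z) - E (e (φ n)) (T z)‖)
      · intro n
        rw [hkey n, norm_neg]
        exact norm_add_le _ _
      · simpa using hTconv.add hEz
    have hhalf : ∀ n, (1:ℝ)/2 ≤ ‖f (φ n) - A (φ n) (f (φ n) + E (e (φ n)) z)‖ :=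
      fun n => hfr (φ n) _
    have : (1:ℝ)/2 ≤ 0 := le_of_tendsto_of_tendsto' tendsto_const_nhds hconv hhalf
    norm_num at this
  obtain ⟨ε₂, hε₂, hε₂₁, hsurj⟩ := step2
  refine ⟨ε₂, hε₂, max (1/c) 1, lt_of_lt_of_le one_pos (le_max_right _ _), ?_⟩
  intro ε hε
  have hε' : ε ∈ Set.Ioc (0:ℝ) ε₁ := ⟨hε.1, le_trans hε.2 hε₂₁⟩
  set A : Xε ε →L[ℝ] Xε ε := ContinuousLinearMap.id ℝ (Xε ε) + Tε ε with hA_def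
  have hAapp : ∀ x, A x = x + Tε ε x := by intro x; simp [hA_def]
  have hlowA : ∀ x, c * ‖x‖ ≤ ‖A x‖ := by
    intro x; rw [hAapp]; exact hlow ε hε' x
  have hinj : Function.Injective A := by
    intro x y hxy
    have h0 : A (x - y) = 0 := by rw [map_sub, hxy, sub_self]
    have := hlowA (x - y)
    rw [h0, norm_zero] at this
    have hxy0 : ‖x - y‖ = 0 := le_antisymm (by nlinarith [norm_nonneg (x - y)]) (norm_nonneg _)
    exact sub_eq_zero.mp (norm_eq_zero.mp hxy0)
  have hsurjA : Function.Surjective A := by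
    intro b
    obtain ⟨a, ha⟩ := hsurj ε hε b
    exact ⟨a, by rw [hAapp]; exact ha⟩
  have hbij : Function.Bijective A := ⟨hinj, hsurjA⟩
  let eqA : Xε ε ≃ₗ[ℝ] Xε ε := LinearEquiv.ofBijective (A : Xε ε →ₗ[ℝ] Xε ε) hbij
  have heqA : ∀ x, eqA x = A x := fun x => rfl
  have hSbound : ∀ x, ‖(eqA.symm : Xε ε →ₗ[ℝ] Xε ε) x‖ ≤ (1/c) * ‖x‖ := by
    intro x
    have h1 : A (eqA.symm x) = x := by
      rw [← heqA]; exact eqA.apply_symm_apply x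
    have h3 := hlowA (eqA.symm x)
    rw [h1] at h3
    have h2 : (eqA.symm : Xε ε →ₗ[ℝ] Xε ε) x = eqA.symm x := rfl
    rw [h2, div_mul_eq_mul_div, le_div_iff₀ hc]
    nlinarith
  let Sε : Xε ε →L[ℝ] Xε ε :=
    LinearMap.mkContinuous (eqA.symm : Xε ε →ₗ[ℝ] Xε ε) (1/c) hSbound
  refine ⟨Sε, ?_, ?_, ?_⟩
  · intro x
    show eqA.symm (A x) = x
    rw [← heqA]; exact eqA.symm_apply_apply x
  · intro x
    show A (eqA.symm x) = x
    rw [← heqA]; exact eqA.apply_symm_apply x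
  · exact le_trans (LinearMap.mkContinuous_norm_le _ (by positivity) _) (le_max_left _ _)
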